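/- arXiv:1504.03674 — 2 statements merged into one kernel-verified Lean document; each statement's English description precedes it below -/
import Mathlib

section
/- Let 0 → A →f B →g C → 0 be a short exact sequence of abelian groups (that is, f is injective, g is surjective, and the image of f equals the kernel of g). Then B is almost finitely generated if and only if both A and C are almost finitely generated. In particular, subgroups, quotient groups, and extensions of almost finitely generated abelian groups are almost finitely generated, i.e. the almost finitely generated abelian groups form a Serre class. -/
/-- An abelian group `M` is *almost trivial* if there is a nonzero integer `r` with
`r • m = 0` for all `m ∈ M`. -/
def AlmostTrivial (M : Type*) [AddCommGroup M] : Prop :=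
  ∃ r : ℤ, r ≠ 0 ∧ ∀ m : M, r • m = 0

/-- An abelian group `M` is *almost finitely generated* if its torsion subgroup is
almost trivial and the quotient `M / tors M` is a finitely generated abelian group. -/
def AlmostFinitelyGenerated (M : Type*) [AddCommGroup M] : Prop :=
  AlmostTrivial (AddCommGroup.torsion M) ∧ AddGroup.FG (M ⧸ AddCommGroup.torsion M)

section Aux

variable {G H : Type*} [AddCommGroup G] [AddCommGroup H]

/-- A group admitting an injection into a finitely generated abelian group is
finitely generated. -/
lemma addGroup_fg_of_injective (hH : AddGroup.FG H) (f : G →+ H)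
    (hf : Function.Injective f) : AddGroup.FG G := by
  haveI : Module.Finite ℤ H := Module.Finite.iff_addGroup_fg.mpr hH
  haveI : IsNoetherian ℤ H := isNoetherian_of_isNoetherianRing_of_finite ℤ H
  haveI : Module.Finite ℤ G := Module.Finite.of_injective f.toIntLinearMap hf
  exact Module.Finite.iff_addGroup_fg.mp this

/-- A subgroup of a finitely generated abelian subgroup is finitely generated. -/
lemma addSubgroup_fg_of_le {K N : AddSubgroup G} (hN : N.FG) (hKN : K ≤ N) : K.FG := by
  rw [← AddGroup.fg_iff_addSubgroup_fg] at hN ⊢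
  exact addGroup_fg_of_injective hN (AddSubgroup.inclusion hKN)
    (AddSubgroup.inclusion_injective hKN)

lemma addSubgroup_fg_map {N : AddSubgroup G} (hN : N.FG) (f : G →+ H) : (N.map f).FG := by
  obtain ⟨S, hS, hSfin⟩ := (AddSubgroup.fg_iff N).mp hN
  exact (AddSubgroup.fg_iff _).mpr ⟨f '' S, by rw [← AddMonoidHom.map_closure, hS],
    hSfin.image f⟩

lemma addSubgroup_fg_sup {N K : AddSubgroup G} (hN : N.FG) (hK : K.FG) : (N ⊔ K).FG := by
  obtain ⟨S, hS, hSfin⟩ := (AddSubgroup.fg_iff N).mp hN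
  obtain ⟨T, hT, hTfin⟩ := (AddSubgroup.fg_iff K).mp hK
  exact (AddSubgroup.fg_iff _).mpr ⟨S ∪ T,
    by rw [AddSubgroup.closure_union, hS, hT], hSfin.union hTfin⟩

lemma isOfFinAddOrder_of_zsmul_eq_zero {x : G} {n : ℤ} (hn : n ≠ 0) (h : n • x = 0) :
    IsOfFinAddOrder x := by
  have h2 : (n.natAbs : ℤ) • x = 0 := by
    rcases Int.natAbs_eq n with h' | h'
    · rw [← h', h]
    · rw [(by omega : (n.natAbs : ℤ) = -n), neg_zsmul, h, neg_zero]
  rw [natCast_zsmul] at h2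
  exact isOfFinAddOrder_iff_nsmul_eq_zero.mpr ⟨n.natAbs, Int.natAbs_pos.mpr hn, h2⟩

/-- The key characterization: `M` is almost finitely generated iff some nonzero
integer multiple of `M` lands in a finitely generated subgroup. -/
lemma afg_iff (M : Type*) [AddCommGroup M] :
    AlmostFinitelyGenerated M ↔
      ∃ r : ℤ, r ≠ 0 ∧ ∃ N : AddSubgroup M, N.FG ∧ ∀ m : M, r • m ∈ N := by
  classical
  set T := AddCommGroup.torsion M with hTdef
  set π := QuotientAddGroup.mk' T with hπ
  have hπs : Function.Surjective π := QuotientAddGroup.mk'_surjective T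
  constructor
  · rintro ⟨⟨r, hr, hr0⟩, hfg⟩
    obtain ⟨S, hS, hSfin⟩ := AddGroup.fg_iff.mp hfg
    set t : (M ⧸ T) → M := Function.surjInv hπs with ht
    refine ⟨r, hr, AddSubgroup.closure (t '' S),
      (AddSubgroup.fg_iff _).mpr ⟨t '' S, rfl, hSfin.image t⟩, ?_⟩
    intro m
    have hmap : (AddSubgroup.closure (t '' S)).map π = ⊤ := by
      rw [AddMonoidHom.map_closure, Set.image_image]
      simpa [ht, Function.surjInv_eq hπs] using hS
    have hm : π m ∈ (AddSubgroup.closure (t '' S)).map π := by rw [hmap]; trivial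
    obtain ⟨n, hn, hnm⟩ := hm
    have htor : m - n ∈ T := by
      have h1 : π (m - n) = 0 := by rw [map_sub, hnm, sub_self]
      rwa [hπ, QuotientAddGroup.mk'_apply, QuotientAddGroup.eq_zero_iff] at h1
    have h0 : r • (m - n) = 0 := by
      simpa using congrArg Subtype.val (hr0 ⟨m - n, htor⟩)
    have hrs : r • m = r • n :=
      sub_eq_zero.mp ((smul_sub r m n).symm.trans h0)
    rw [hrs]
    exact AddSubgroup.zsmul_mem _ hn r
  · rintro ⟨r, hr, N, hN, hmem⟩
    have hKfg : (N ⊓ T).FG := addSubgroup_fg_of_le hN inf_le_left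
    haveI : AddGroup.FG ↥(N ⊓ T) := (AddGroup.fg_iff_addSubgroup_fg _).mpr hKfg
    have htorK : AddMonoid.IsTorsion ↥(N ⊓ T) := by
      intro x
      have hx : IsOfFinAddOrder (x : M) := x.2.2
      obtain ⟨k, hk, hxk⟩ := isOfFinAddOrder_iff_nsmul_eq_zero.mp hx
      refine isOfFinAddOrder_iff_nsmul_eq_zero.mpr ⟨k, hk, ?_⟩
      ext
      push_cast
      simpa using hxk
    haveI : Finite ↥(N ⊓ T) := AddCommGroup.finite_of_fg_torsion _ htorK
    set e := AddMonoid.exponent ↥(N ⊓ T) with he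
    have he0 : e ≠ 0 := AddMonoid.exponent_ne_zero_of_finite
    constructor
    · refine ⟨(e : ℤ) * r, mul_ne_zero (Int.natCast_ne_zero.mpr he0) hr, ?_⟩
      intro x
      have hxN : r • (x : M) ∈ N := hmem x
      have hxT : r • (x : M) ∈ T := (x.2 : IsOfFinAddOrder (x : M)).zsmul
      have hz := AddMonoid.exponent_nsmul_eq_zero (⟨r • (x : M), hxN, hxT⟩ : ↥(N ⊓ T))
      have hz' : e • (r • (x : M)) = 0 := by
        simpa using congrArg Subtype.val hz
      ext
      push_cast
      rw [mul_zsmul, ← natCast_zsmul] at *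
      simpa using hz'
    · have hmapfg : (N.map π).FG := addSubgroup_fg_map hN π
      haveI : AddGroup.FG ↥(N.map π) := (AddGroup.fg_iff_addSubgroup_fg _).mpr hmapfg
      have hsub : ∀ q : M ⧸ T, r • q ∈ N.map π := by
        intro q
        obtain ⟨m, rfl⟩ := hπs q
        exact ⟨r • m, hmem m, by simp⟩
      let φ : (M ⧸ T) →+ ↥(N.map π) :=
        { toFun := fun q => ⟨r • q, hsub q⟩
          map_zero' := Subtype.ext (smul_zero r)
          map_add' := fun a b => Subtype.ext (smul_add r a b) }
      have hφ : Function.Injective φ := by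
        intro a b hab
        obtain ⟨x, rfl⟩ := hπs a
        obtain ⟨y, rfl⟩ := hπs b
        have h1 : r • π x = r • π y := congrArg Subtype.val hab
        have h2 : π (r • (x - y)) = 0 := by
          rw [map_zsmul, map_sub, smul_sub, h1, sub_self]
        have h3 : r • (x - y) ∈ T := by
          rwa [hπ, QuotientAddGroup.mk'_apply, QuotientAddGroup.eq_zero_iff] at h2
        obtain ⟨k, hk, hk0⟩ := isOfFinAddOrder_iff_nsmul_eq_zero.mp h3
        have h4 : ((k : ℤ) * r) • (x - y) = 0 := by
          rw [mul_zsmul, natCast_zsmul]; exact hk0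
        have h5 : x - y ∈ T :=
          isOfFinAddOrder_of_zsmul_eq_zero
            (mul_ne_zero (Int.natCast_ne_zero.mpr hk.ne') hr) h4
        have h6 : π (x - y) = 0 := by
          rw [hπ, QuotientAddGroup.mk'_apply, QuotientAddGroup.eq_zero_iff]; exact h5
        rw [map_sub, sub_eq_zero] at h6
        exact h6
      exact addGroup_fg_of_injective ‹AddGroup.FG ↥(N.map π)› φ hφ

end Aux

/-- For a short exact sequence `0 → A → B → C → 0` of abelian
groups, `B` is almost finitely generated if and only if both `A` and `C` are; i.e.
the almost finitely generated abelian groups form a Serre class. -/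
theorem stmt4 {A B C : Type*} [AddCommGroup A] [AddCommGroup B] [AddCommGroup C]
    (f : A →+ B) (g : B →+ C) (hf : Function.Injective f) (hg : Function.Surjective g)
    (hfg : f.range = g.ker) :
    AlmostFinitelyGenerated B ↔ AlmostFinitelyGenerated A ∧ AlmostFinitelyGenerated C := by
  rw [afg_iff, afg_iff, afg_iff]
  constructor
  · rintro ⟨r, hr, N, hN, hmem⟩
    have hcomapfg : (N.comap f).FG := by
      rw [← AddGroup.fg_iff_addSubgroup_fg]
      refine addGroup_fg_of_injective ((AddGroup.fg_iff_addSubgroup_fg N).mpr hN)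
        { toFun := fun a => ⟨f a, a.2⟩
          map_zero' := Subtype.ext (map_zero f)
          map_add' := fun a b => Subtype.ext (map_add f _ _) } ?_
      intro a b hab
      exact Subtype.ext (hf (congrArg Subtype.val hab))
    refine ⟨⟨r, hr, N.comap f, hcomapfg, fun a => ?_⟩,
      r, hr, N.map g, addSubgroup_fg_map hN g, fun c => ?_⟩
    · rw [AddSubgroup.mem_comap, map_zsmul]
      exact hmem (f a)
    · obtain ⟨b, rfl⟩ := hg c
      exact ⟨r • b, hmem b, by simp⟩
  · rintro ⟨⟨rA, hrA, NA, hNA, hmA⟩, rC, hrC, NC, hNC, hmC⟩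
    obtain ⟨SC, hSC, hSCfin⟩ := (AddSubgroup.fg_iff NC).mp hNC
    set t : C → B := Function.surjInv hg with ht
    set L := AddSubgroup.closure (t '' SC) with hL
    refine ⟨rA * rC, mul_ne_zero hrA hrC, NA.map f ⊔ L,
      addSubgroup_fg_sup (addSubgroup_fg_map hNA f)
        ((AddSubgroup.fg_iff _).mpr ⟨t '' SC, rfl, hSCfin.image t⟩), ?_⟩
    intro b
    have hgL : L.map g = NC := by
      rw [hL, AddMonoidHom.map_closure, Set.image_image]
      simpa [ht, Function.surjInv_eq hg] using hSC
    have hmemC : g (rC • b) ∈ L.map g := by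
      rw [hgL, map_zsmul]
      exact hmC (g b)
    obtain ⟨l, hl, hlg⟩ := hmemC
    have hker : rC • b - l ∈ g.ker := by
      rw [AddMonoidHom.mem_ker, map_sub, hlg, sub_self]
    rw [← hfg] at hker
    obtain ⟨a, ha⟩ := hker
    have hrw : rC • b = f a + l := by rw [ha]; abel
    have key : (rA * rC) • b = f (rA • a) + rA • l := by
      rw [mul_zsmul, hrw, smul_add, map_zsmul]
    rw [key]
    exact AddSubgroup.add_mem _
      (AddSubgroup.mem_sup_left ⟨rA • a, hmA a, rfl⟩)
      (AddSubgroup.mem_sup_right (AddSubgroup.zsmul_mem _ hl rA))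
end

section
/- Let G be a group and let H and K be subgroups of G. For each double coset j ∈ K\G/H choose a representative g_j ∈ G with j = K g_j H, and set L_j = H ∩ g_j⁻¹ K g_j. Then the map which sends the class xL_j ∈ G/L_j in the component indexed by j to the pair (xH, x g_j⁻¹ K) ∈ G/H × G/K is a well-defined bijection from the disjoint union ⨿_{j ∈ K\G/H} G/L_j to G/H × G/K, and it is G-equivariant, where G acts on each coset space G/L_j, G/H, G/K by left translation and on the product G/H × G/K diagonally. -/
/-- Let `G` be a group and `H`, `K` subgroups. Choose for every
double coset `j ∈ K\G/H` a representative `r j ∈ G` (i.e. `K·(r j)·H = j`), and set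
`L j = H ⊓ (r j)⁻¹ K (r j)`. Then the assignment sending, in the component indexed
by `j`, the coset `x·(L j) ∈ G/L j` to the pair `(x·H, x·(r j)⁻¹·K) ∈ G/H × G/K`
yields a well-defined map (this is the content of the existential quantifier), which
is bijective and `G`-equivariant for the left translation actions (diagonal action
on the product). -/
theorem stmt9 {G : Type*} [Group G] (H K : Subgroup G)
    (r : DoubleCoset.Quotient (K : Set G) (H : Set G) → G)
    (hr : ∀ j, DoubleCoset.mk K H (r j) = j)
    (L : DoubleCoset.Quotient (K : Set G) (H : Set G) → Subgroup G)
    (hL : ∀ j, L j = H ⊓ K.comap (MulAut.conj (r j)).toMonoidHom) :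
    ∃ F : (Σ j : DoubleCoset.Quotient (K : Set G) (H : Set G), G ⧸ L j) → (G ⧸ H) × (G ⧸ K),
      (∀ (j : DoubleCoset.Quotient (K : Set G) (H : Set G)) (x : G),
          F ⟨j, (x : G ⧸ L j)⟩ = ((x : G ⧸ H), ((x * (r j)⁻¹ : G) : G ⧸ K))) ∧
      Function.Bijective F ∧
      (∀ (g : G) (j : DoubleCoset.Quotient (K : Set G) (H : Set G)) (y : G ⧸ L j),
          F ⟨j, g • y⟩ = g • F ⟨j, y⟩) := by
  have memL : ∀ j (x : G), x ∈ L j ↔ x ∈ H ∧ r j * x * (r j)⁻¹ ∈ K := by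
    intro j x
    rw [hL j]
    simp [Subgroup.mem_inf, Subgroup.mem_comap, MulAut.conj_apply, mul_assoc]
  refine ⟨fun p => Quotient.liftOn' p.2
      (fun x => ((x : G ⧸ H), ((x * (r p.1)⁻¹ : G) : G ⧸ K))) ?_, ?_, ?_, ?_⟩
  · intro a b hab
    rw [QuotientGroup.leftRel_apply, memL] at hab
    obtain ⟨h1, h2⟩ := hab
    refine Prod.ext (QuotientGroup.eq.2 h1) (QuotientGroup.eq.2 ?_)
    simpa [mul_assoc] using h2
  · intro j x; rfl
  · constructor
    · rintro ⟨j, y⟩ ⟨j', y'⟩ hF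
      induction y using Quotient.inductionOn' with | h x =>
      induction y' using Quotient.inductionOn' with | h x' =>
      simp only [Quotient.liftOn'_mk'', Prod.mk.injEq] at hF
      obtain ⟨hH, hK⟩ := hF
      rw [QuotientGroup.eq] at hH hK
      -- hH : x⁻¹ * x' ∈ H, hK : (x * (r j)⁻¹)⁻¹ * (x' * (r j')⁻¹) ∈ K
      have hjj : j = j' := by
        rw [← hr j, ← hr j', DoubleCoset.eq]
        exact ⟨((x * (r j)⁻¹)⁻¹ * (x' * (r j')⁻¹))⁻¹, K.inv_mem hK, x⁻¹ * x', hH,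
          by group⟩
      subst hjj
      refine Sigma.ext rfl (heq_of_eq ?_)
      exact Quotient.sound' (by
        rw [QuotientGroup.leftRel_apply, memL]
        exact ⟨hH, by simpa [mul_assoc] using hK⟩)
    · rintro ⟨a, b⟩
      induction a using Quotient.inductionOn' with | h a =>
      induction b using Quotient.inductionOn' with | h b =>
      set j := DoubleCoset.mk K H (b⁻¹ * a) with hj
      obtain ⟨k, hk, h, hh, hbar⟩ := (DoubleCoset.eq K H (b⁻¹ * a) (r j)).1 (hr j).symm
      -- r j = k * (b⁻¹ * a) * h
      refine ⟨⟨j, ((a * h : G) : G ⧸ L j)⟩, ?_⟩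
      simp only [Quotient.liftOn'_mk'', Prod.mk.injEq]
      refine ⟨QuotientGroup.eq.2 (by simpa using H.inv_mem hh), QuotientGroup.eq.2 ?_⟩
      have : a * h * (r j)⁻¹ = b * k⁻¹ := by rw [hbar]; group
      rw [this]
      simpa using K.inv_mem hk
  · intro g j y
    induction y using Quotient.inductionOn' with | h x =>
    show Quotient.liftOn' (Quotient.mk'' (g * x) : G ⧸ L j) _ _ = _
    simp only [Quotient.liftOn'_mk'']
    refine Prod.ext rfl ?_
    show ((g * x * (r j)⁻¹ : G) : G ⧸ K) = g • ((x * (r j)⁻¹ : G) : G ⧸ K)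
    rw [mul_assoc]
    rfl
end
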